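/- Let k ≥ 2, let (F_n^{(k)})_{n≥0} be the k-generalized Fibonacci sequence, let α_1, ..., α_k be the complex roots of Ψ_k(X) = X^k − X^{k−1} − ⋯ − X − 1 with α_1 > 1 real. For integers x > y ≥ 4 and λ = x − y, the algebraic number γ = (F_x^{(k)} − 1) − α_1^{λ}(F_y^{(k)} − 1) is nonzero and satisfies |γ| < (3/2)·α_1^{λ}; moreover for each i with 2 ≤ i ≤ k, |(F_x^{(k)} − 1) − α_i^{λ}(F_y^{(k)} − 1)| < α_1^{x}. -/

import Mathlib

/-- Shifted `k`-generalized Fibonacci sequence: `gfib k` starts with `k - 1` zeros,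
then a `1`, and every subsequent term is the sum of the preceding `k` terms. -/
def gfib (k : ℕ) : ℕ → ℕ
  | n =>
    if k = 0 then 0
    else if n + 1 < k then 0
    else if n + 1 = k then 1
    else ∑ i ∈ Finset.range k, gfib k (n - (i + 1))
  decreasing_by omega

/-- The `k`-generalized Fibonacci number `F_n^{(k)}` for `n ≥ 0` (and `k ≥ 2`):
`F_0^{(k)} = 0`, `F_1^{(k)} = 1` (conceptually preceded by `k - 2` further zeros at
negative indices), and `F_{n+k}^{(k)} = F_{n+k-1}^{(k)} + ⋯ + F_n^{(k)}`. -/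
def kFib (k n : ℕ) : ℕ := gfib k (n + k - 2)

variable {k : ℕ}

lemma gfib_zero (h : n + 1 < k) : gfib k n = 0 := by
  rw [gfib]
  simp only [if_pos h]
  rw [if_neg (by omega)]

lemma gfib_one (hk : k ≠ 0) (h : n + 1 = k) : gfib k n = 1 := by
  rw [gfib]
  rw [if_neg hk, if_neg (by omega), if_pos h]

lemma gfib_rec (hk : k ≠ 0) (h : k ≤ n) : gfib k n = ∑ i ∈ Finset.range k, gfib k (n - (i + 1)) := by
  rw [gfib]
  rw [if_neg hk, if_neg (by omega), if_neg (by omega)]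

lemma gfib_pos (hk : k ≠ 0) : ∀ m, k - 1 ≤ m → 1 ≤ gfib k m := by
  intro m
  induction m using Nat.strong_induction_on with
  | _ m ih =>
    intro hm
    rcases lt_or_ge m k with h | h
    · have : m + 1 = k := by omega
      rw [gfib_one hk this]
    · rw [gfib_rec hk h]
      calc 1 ≤ gfib k (m - 1) := ih (m-1) (by omega) (by omega)
        _ = ∑ i ∈ Finset.range 1, gfib k (m - (i+1)) := by simp
        _ ≤ _ := Finset.sum_le_sum_of_subset (by simpa using Nat.pos_of_ne_zero hk)

lemma gfib_two (hk : 2 ≤ k) : ∀ m, k + 1 ≤ m → 2 ≤ gfib k m := by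
  intro m hm
  rw [gfib_rec (by omega) (by omega)]
  calc 2 = ∑ i ∈ Finset.range 2, 1 := by simp
    _ ≤ ∑ i ∈ Finset.range 2, gfib k (m - (i+1)) := by
        apply Finset.sum_le_sum
        intro i hi
        simp only [Finset.mem_range] at hi
        exact gfib_pos (by omega) _ (by omega)
    _ ≤ _ := Finset.sum_le_sum_of_subset (by intro i hi; simp only [Finset.mem_range] at *; omega)

lemma gfib_doubling (hk : k ≠ 0) (h : k ≤ m) :
    gfib k (m+1) + gfib k (m - k) = 2 * gfib k m := by
  have h1 : gfib k (m+1) = ∑ i ∈ Finset.range k, gfib k (m - i) := by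
    rw [gfib_rec hk (by omega)]
    apply Finset.sum_congr rfl
    intro i hi
    congr 1
    omega
  have h2 : gfib k m = ∑ i ∈ Finset.range k, gfib k (m - (i+1)) := gfib_rec hk h
  obtain ⟨j, rfl⟩ : ∃ j, k = j + 1 := ⟨k - 1, by omega⟩
  rw [Finset.sum_range_succ'] at h1
  rw [Finset.sum_range_succ] at h2
  have e1 : ∀ i, (m : ℕ) - (i+1) = m - i - 1 := by intro i; omega
  -- h1 : gfib k (m+1) = ∑ i in range j, gfib (m - (i+1)) + gfib (m - 0)
  simp only [Nat.sub_zero] at h1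
  omega

section RealRoot
variable {a : ℝ}

-- key: a^k * (2 - a) = 1
lemma key_eq (ha1 : 1 < a) (hroot : a ^ k = ∑ j ∈ Finset.range k, a ^ j) :
    a ^ k * (2 - a) = 1 := by
  have hgeom : ∑ j ∈ Finset.range k, a ^ j = (a ^ k - 1) / (a - 1) :=
    geom_sum_eq (by linarith) k
  rw [hgeom] at hroot
  have : a - 1 ≠ 0 := by linarith
  field_simp at hroot
  nlinarith [hroot]

lemma a_lt_two (ha1 : 1 < a) (hkey : a ^ k * (2 - a) = 1) : a < 2 := by
  nlinarith [pow_pos (show (0:ℝ) < a by linarith) k]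

lemma a_sq (hk : 2 ≤ k) (ha1 : 1 < a) (hroot : a ^ k = ∑ j ∈ Finset.range k, a ^ j) :
    a + 1 ≤ a ^ 2 := by
  have ha0 : (0:ℝ) < a := by linarith
  have h2 : a ^ (k-1) + a ^ (k-2) ≤ a ^ k := by
    rw [hroot]
    have : a ^ (k-1) + a ^ (k-2) = ∑ j ∈ {k-2, k-1}, a ^ j := by
      rw [Finset.sum_insert (by simp; omega), Finset.sum_singleton]
      ring
    rw [this]
    apply Finset.sum_le_sum_of_subset_of_nonneg
    · intro i hi; simp at hi ⊢; omega
    · intro i _ _; positivity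
  have hek : a ^ k = a ^ (k-2) * a ^ 2 := by
    rw [← pow_add]; congr 1; omega
  have hek1 : a ^ (k-1) = a ^ (k-2) * a := by
    rw [← pow_succ]; congr 1; omega
  rw [hek, hek1] at h2
  have hp : (0:ℝ) < a ^ (k-2) := pow_pos ha0 _
  nlinarith [h2]

lemma a_ge (ha1 : 1 < a) (hsq : a + 1 ≤ a ^ 2) : 1.6 ≤ a := by nlinarith

-- strictly decreasing "hsum"
lemma hsum_lt (hk : k ≠ 0) {r s : ℝ} (hr : 0 < r) (hrs : r < s) :
    ∑ j ∈ Finset.range k, (s⁻¹) ^ (j+1) < ∑ j ∈ Finset.range k, (r⁻¹) ^ (j+1) := by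
  apply Finset.sum_lt_sum_of_nonempty (by simpa [Finset.nonempty_range_iff] using hk)
  intro j _
  have hs : 0 < s := lt_trans hr hrs
  apply pow_lt_pow_left₀ _ (by positivity) (by omega)
  exact (inv_lt_inv₀ hs hr).mpr hrs

lemma hsum_a (ha1 : 1 < a) (hroot : a ^ k = ∑ j ∈ Finset.range k, a ^ j) :
    ∑ j ∈ Finset.range k, (a⁻¹) ^ (j+1) = 1 := by
  have ha0 : (0:ℝ) < a := by linarith
  have hak : (0:ℝ) < a ^ k := pow_pos ha0 k
  have : ∑ j ∈ Finset.range k, (a⁻¹) ^ (j+1) = (∑ j ∈ Finset.range k, a ^ (k - (j+1))) / a ^ k := by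
    rw [Finset.sum_div]
    apply Finset.sum_congr rfl
    intro j hj
    simp only [Finset.mem_range] at hj
    rw [inv_pow, eq_div_iff (ne_of_gt hak), inv_mul_eq_div, div_eq_iff (by positivity)]
    rw [← pow_add]
    congr 1
    omega
  rw [this, div_eq_one_iff_eq (ne_of_gt hak), hroot]
  -- ∑ j in range k, a ^ (k - (j+1)) = ∑ j in range k, a ^ j
  apply Finset.sum_nbij' (fun j => k - (j+1)) (fun j => k - (j+1))
  all_goals intro j hj
  all_goals simp only [Finset.mem_range] at *
  all_goals first
    | omega
    | rfl

end RealRoot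

section Compare
variable {a : ℝ} (hk : k ≠ 0) (ha1 : 1 < a)
  (hroot : a ^ k = ∑ j ∈ Finset.range k, a ^ j)

include hk ha1 hroot in
lemma le_a_of_hsum_ge {r : ℝ} (hr : 0 < r)
    (h : 1 ≤ ∑ j ∈ Finset.range k, (r⁻¹) ^ (j+1)) : r ≤ a := by
  by_contra hc
  push_neg at hc
  have := hsum_lt hk (show (0:ℝ) < a by linarith) hc
  rw [hsum_a ha1 hroot] at this
  linarith

include hk ha1 hroot in
lemma ge_a_of_hsum_le {r : ℝ} (hr : 0 < r)
    (h : ∑ j ∈ Finset.range k, (r⁻¹) ^ (j+1) ≤ 1) : a ≤ r := by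
  by_contra hc
  push_neg at hc
  have := hsum_lt hk hr hc
  rw [hsum_a ha1 hroot] at this
  linarith

end Compare

lemma pow16 : ∀ m : ℕ, 2 ≤ m → (m : ℝ) < 1.6 ^ (m+1) := by
  intro m
  induction m with
  | zero => omega
  | succ n ih =>
    intro h
    rcases Nat.lt_or_ge n 2 with h2 | h2
    · interval_cases n
      all_goals norm_num
    · have h3 := ih h2
      have hp : (0:ℝ) < 1.6 ^ (n+1) := by positivity
      have : (1.6:ℝ) ^ (n+1+1) = 1.6 ^ (n+1) * 1.6 := by rw [pow_succ]
      rw [this]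
      have hn : (2:ℝ) ≤ (n:ℝ) := by exact_mod_cast h2
      push_cast
      nlinarith

lemma pow16' : ∀ m : ℕ, 5 ≤ m → 2*(m : ℝ) ≤ 1.6 ^ m := by
  intro m
  induction m with
  | zero => omega
  | succ n ih =>
    intro h
    rcases Nat.lt_or_ge n 5 with h2 | h2
    · interval_cases n
      all_goals first | omega | norm_num
    · have h3 := ih h2
      have hp : (0:ℝ) < 1.6 ^ n := by positivity
      have : (1.6:ℝ) ^ (n+1) = 1.6 ^ n * 1.6 := by rw [pow_succ]
      rw [this]
      have hn : (5:ℝ) ≤ (n:ℝ) := by exact_mod_cast h2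
      push_cast
      nlinarith

section RR
variable {a : ℝ}

lemma key_ineq (hk : 2 ≤ k) (ha1 : 1 < a) (hkey : a ^ k * (2 - a) = 1)
    (ha2 : a < 2) (h16 : 1.6 ≤ a)
    (hsumge : ∀ {r : ℝ}, 0 < r → 1 ≤ ∑ j ∈ Finset.range k, (r⁻¹) ^ (j+1) → r ≤ a)
    (hpow16' : ∀ m : ℕ, 5 ≤ m → 2*(m : ℝ) ≤ 1.6 ^ m) :
    (k:ℝ) * (a * (2-a)) ≤ (a-1)^2 + 1 := by
  have ha0 : (0:ℝ) < a := by linarith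
  rcases Nat.lt_or_ge k 5 with h5 | h5
  · interval_cases k
    · push_cast
      nlinarith [sq_nonneg (a - 1.6)]
    · have h175 : (1.75:ℝ) ≤ a := by
        apply hsumge (by norm_num)
        rw [Finset.sum_range_succ, Finset.sum_range_succ, Finset.sum_range_succ]
        norm_num
      push_cast
      nlinarith [sq_nonneg (a - 1.75)]
    · have h18 : (1.8:ℝ) ≤ a := by
        apply hsumge (by norm_num)
        rw [Finset.sum_range_succ, Finset.sum_range_succ, Finset.sum_range_succ,
          Finset.sum_range_succ]
        norm_num
      push_cast
      nlinarith [sq_nonneg (a - 1.8)]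
  · have h1 : 2*(k:ℝ) ≤ a ^ k := by
      calc 2*(k:ℝ) ≤ 1.6 ^ k := hpow16' k h5
        _ ≤ a ^ k := pow_le_pow_left₀ (by norm_num) h16 k
    have h2 : (k:ℝ) * a ≤ a ^ k := by nlinarith [(show (1:ℝ) ≤ (k:ℝ) by exact_mod_cast (show 1 ≤ k by omega))]
    have h3 : (k:ℝ) * (a * (2-a)) ≤ a ^ k * (2-a) := by
      nlinarith [mul_nonneg (sub_nonneg.mpr h2) (show (0:ℝ) ≤ 2 - a by linarith)]
    nlinarith [h3, sq_nonneg (a-1)]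

lemma apow_gt_k (hk : 2 ≤ k) (h16 : 1.6 ≤ a)
    (hpow : ∀ m : ℕ, 2 ≤ m → (m : ℝ) < 1.6 ^ (m+1)) :
    (k:ℝ) < a ^ (k+1) := by
  calc (k:ℝ) < 1.6 ^ (k+1) := hpow k hk
    _ ≤ a ^ (k+1) := pow_le_pow_left₀ (by norm_num) h16 _

lemma pow_km1 (hk : 2 ≤ k) (hkey : a ^ k * (2 - a) = 1) :
    a ^ (k-1) * (a * (2-a)) = 1 := by
  have h : a ^ (k-1) * a = a ^ k := by
    rw [← pow_succ]; congr 1; omega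
  linear_combination (2-a) * h + hkey

lemma akp1 (hkey : a ^ k * (2 - a) = 1) : a^(k+1) * (2 - a) = a := by
  rw [pow_succ]; linear_combination a * hkey

lemma c_le_half (hk : 2 ≤ k) (ha1 : 1 < a) (hkey : a ^ k * (2 - a) = 1)
    (ha2 : a < 2) (h16 : 1.6 ≤ a)
    (hsumge : ∀ {r : ℝ}, 0 < r → 1 ≤ ∑ j ∈ Finset.range k, (r⁻¹) ^ (j+1) → r ≤ a)
    (hpow16' : ∀ m : ℕ, 5 ≤ m → 2*(m : ℝ) ≤ 1.6 ^ m) :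
    2 * ((a-1) * a^(k-1)) ≤ a^(k+1) - k := by
  have ha0 : (0:ℝ) < a := by linarith
  have hki := key_ineq hk ha1 hkey ha2 h16 @hsumge hpow16'
  have hm : (0:ℝ) < a * (2-a) := by nlinarith
  have e0 := pow_km1 hk hkey
  have e1 : (2 * ((a-1) * a^(k-1))) * (a * (2-a)) = 2*(a-1) := by
    linear_combination 2*(a-1) * e0
  have e2 : (a^(k+1) - k) * (a * (2-a)) = a^2 - (k:ℝ)*(a*(2-a)) := by
    linear_combination a * akp1 hkey
  have hstep : 2*(a-1) ≤ a^2 - (k:ℝ)*(a*(2-a)) := by nlinarith [hki]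
  exact le_of_mul_le_mul_right (by rw [e1, e2]; exact hstep) hm

lemma c_ge_inv (hk : 2 ≤ k) (ha1 : 1 < a) (hkey : a ^ k * (2 - a) = 1) (ha2 : a < 2) :
    a^(k+1) - k ≤ 2 * ((a-1) * a^k) := by
  have h2a : (0:ℝ) < 2 - a := by linarith
  apply le_of_mul_le_mul_right _ h2a
  have e1 : (a^(k+1) - (k:ℝ)) * (2-a) = a - (k:ℝ)*(2-a) := by
    linear_combination akp1 hkey
  have e2 : (2 * ((a-1) * a^k)) * (2-a) = 2*(a-1) := by
    linear_combination 2*(a-1)*hkey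
  rw [e1, e2]
  have hk1 : (1:ℝ) ≤ (k:ℝ) := by exact_mod_cast Nat.one_le_iff_ne_zero.mpr (by omega)
  nlinarith [hk1]

end RR

lemma gfib_k {k : ℕ} (hk : 2 ≤ k) : gfib k k = 1 := by
  rw [gfib_rec (by omega) le_rfl]
  rw [Finset.sum_eq_single_of_mem 0 (by simp; omega)]
  · exact gfib_one (by omega) (by omega)
  · intro j hj hj0
    simp only [Finset.mem_range] at hj
    exact gfib_zero (by omega)

section Q
variable {k : ℕ} {a : ℝ}

lemma Qid (hk : 2 ≤ k) (ha1 : 1 < a) (hkey : a ^ k * (2 - a) = 1) :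
    ∀ m, k ≤ m → a^(k+1) * (gfib k m : ℝ) =
      (∑ j ∈ Finset.range k, a^(j+1) * (gfib k (m - (j+1)) : ℝ)) + (a-1)*a^(m+1) := by
  intro m
  induction m with
  | zero => omega
  | succ n ih =>
    intro h
    rcases Nat.lt_or_ge n k with hn | hn
    · -- base case : n + 1 = k
      have hnk : n + 1 = k := by omega
      subst hnk
      have hs : ∑ j ∈ Finset.range (n+1), a^(j+1) * (gfib (n+1) (n+1 - (j+1)) : ℝ)
          = a * 1 := by
        rw [Finset.sum_eq_single_of_mem 0 (by simp)]
        · have e : n + 1 - (0+1) = n := by omega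
          rw [e, gfib_one (by omega) rfl]
          norm_num
        · intro j hj hj0
          simp only [Finset.mem_range] at hj
          rw [gfib_zero (show (n+1-(j+1))+1 < n+1 by omega)]
          simp
      rw [hs, gfib_k hk]
      push_cast
      linear_combination akp1 hkey
    · -- inductive step
      have ihn := ih hn
      have hdb := gfib_doubling (show k ≠ 0 by omega) hn
      have hdbR : (gfib k (n+1) : ℝ) = 2 * (gfib k n : ℝ) - (gfib k (n - k) : ℝ) := by
        have := congrArg (Nat.cast : ℕ → ℝ) hdb
        push_cast at this
        linarith
      have hsum1 : ∑ j ∈ Finset.range k, a^(j+1) * (gfib k (n+1 - (j+1)) : ℝ)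
          = ∑ j ∈ Finset.range k, a^(j+1) * (gfib k (n - j) : ℝ) := by
        apply Finset.sum_congr rfl
        intro j hj
        simp only [Finset.mem_range] at hj
        have e : n + 1 - (j+1) = n - j := by omega
        rw [e]
      obtain ⟨l, rfl⟩ : ∃ l, k = l + 1 := ⟨k - 1, by omega⟩
      have hsum2 : ∑ j ∈ Finset.range (l+1), a^(j+1) * (gfib (l+1) (n - j) : ℝ)
          = (∑ i ∈ Finset.range l, a^(i+2) * (gfib (l+1) (n - (i+1)) : ℝ))
            + a * (gfib (l+1) n : ℝ) := by
        rw [Finset.sum_range_succ']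
        norm_num
      have hsum3 : ∑ j ∈ Finset.range (l+1), a^(j+1) * (gfib (l+1) (n - (j+1)) : ℝ)
          = (∑ i ∈ Finset.range l, a^(i+1) * (gfib (l+1) (n - (i+1)) : ℝ))
            + a^(l+1) * (gfib (l+1) (n - (l+1)) : ℝ) := by
        rw [Finset.sum_range_succ]
      have hsum4 : ∑ i ∈ Finset.range l, a^(i+2) * (gfib (l+1) (n - (i+1)) : ℝ)
          = a * ∑ i ∈ Finset.range l, a^(i+1) * (gfib (l+1) (n - (i+1)) : ℝ) := by
        rw [Finset.mul_sum]
        exact Finset.sum_congr rfl fun i _ => by ring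
      rw [hsum1, hsum2, hsum4, hdbR]
      set S := ∑ i ∈ Finset.range l, a^(i+1) * (gfib (l+1) (n - (i+1)) : ℝ) with hS
      have ihn' : a^(l+1+1) * (gfib (l+1) n : ℝ)
          = S + a^(l+1) * (gfib (l+1) (n - (l+1)) : ℝ) + (a-1)*a^(n+1) := by
        rw [ihn, hsum3]
      linear_combination a * ihn' + (gfib (l+1) n : ℝ) * akp1 hkey

end Q

section E
variable {k : ℕ} {a : ℝ}

lemma E_bound (hk : 2 ≤ k) (ha1 : 1 < a)
    (hroot : a ^ k = ∑ j ∈ Finset.range k, a ^ j)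
    (hkey : a ^ k * (2 - a) = 1) (ha2 : a < 2)
    (hD : (k:ℝ) < a^(k+1))
    (hc1 : 2 * ((a-1) * a^(k-1)) ≤ a^(k+1) - k)
    (hc2 : a^(k+1) - k ≤ 2 * ((a-1) * a^k)) :
    ∀ m, |(gfib k m : ℝ) - (a*(a-1)/(a^(k+1) - k)) * a^m| ≤ 1/2 := by
  have ha0 : (0:ℝ) < a := by linarith
  set f : ℝ := a*(a-1)/(a^(k+1) - k) with hf
  have hDpos : (0:ℝ) < a^(k+1) - k := by linarith
  have hfpos : 0 < f := by
    apply div_pos (by nlinarith) hDpos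
  have hfD : f * (a^(k+1) - k) = a*(a-1) := div_mul_cancel₀ _ (ne_of_gt hDpos)
  -- c ≤ 1/2 :
  have hcle : f * a^(k-2) ≤ 1/2 := by
    rw [hf, div_mul_eq_mul_div, div_le_iff₀ hDpos]
    have e : a*(a-1)*a^(k-2) = (a-1)*a^(k-1) := by
      have : a * a^(k-2) = a^(k-1) := by rw [← pow_succ']; congr 1; omega
      linear_combination (a-1) * this
    rw [e]; linarith
  have hcge : 1/2 ≤ f * a^(k-1) := by
    rw [hf, div_mul_eq_mul_div, le_div_iff₀ hDpos]
    have e : a*(a-1)*a^(k-1) = (a-1)*a^k := by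
      have : a * a^(k-1) = a^k := by rw [← pow_succ']; congr 1; omega
      linear_combination (a-1) * this
    rw [e]; linarith
  intro m
  induction m using Nat.strong_induction_on with
  | _ m ih =>
    rcases Nat.lt_or_ge (m+1) k with hm | hm
    · -- zero region
      rw [gfib_zero hm]
      have h1 : f * a^m ≤ f * a^(k-2) := by
        apply mul_le_mul_of_nonneg_left _ (le_of_lt hfpos)
        exact pow_le_pow_right₀ (le_of_lt ha1) (by omega)
      push_cast
      rw [zero_sub, abs_neg, abs_of_nonneg (by positivity)]
      linarith [h1, hcle]
    · rcases Nat.lt_or_ge m k with hm2 | hm2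
      · -- m + 1 = k
        have : m + 1 = k := by omega
        rw [gfib_one (by omega) this]
        have e : f * a^m = f * a^(k-1) := by rw [show m = k-1 by omega]
        rw [abs_le]
        constructor
        · have : f * a^(k-1) = a * (f * a^(k-2)) := by
            have h2 : a * a^(k-2) = a^(k-1) := by rw [← pow_succ']; congr 1; omega
            rw [← h2]; ring
          nlinarith [hcle, e, this]
        · nlinarith [hcge, e]
      · -- recurrence region
        have hQ := Qid hk ha1 hkey m hm2
        have hsplit : ∑ j ∈ Finset.range k, a^(j+1) * ((gfib k (m-(j+1)) : ℝ) - f*a^(m-(j+1)))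
            = (∑ j ∈ Finset.range k, a^(j+1) * (gfib k (m-(j+1)) : ℝ)) - f * ((k:ℝ) * a^m) := by
          rw [Finset.sum_congr rfl (fun j _ => mul_sub (a^(j+1)) ((gfib k (m-(j+1)) : ℝ)) (f*a^(m-(j+1)))), Finset.sum_sub_distrib]
          congr 1
          have e : ∀ j ∈ Finset.range k, a^(j+1) * (f*a^(m-(j+1))) = f * a^m := by
            intro j hj
            simp only [Finset.mem_range] at hj
            have : a^(j+1) * a^(m-(j+1)) = a^m := by
              rw [← pow_add]; congr 1; omega
            linear_combination f * this
          rw [Finset.sum_congr rfl e, Finset.sum_const, Finset.card_range, nsmul_eq_mul]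
          ring
        have hE : a^(k+1) * ((gfib k m : ℝ) - f*a^m)
            = ∑ j ∈ Finset.range k, a^(j+1) * ((gfib k (m-(j+1)) : ℝ) - f*a^(m-(j+1))) := by
          rw [hsplit]
          linear_combination hQ - a^m * hfD
        have hSig : ∑ j ∈ Finset.range k, a^(j+1) = a^(k+1) := by
          have : ∀ j ∈ Finset.range k, a^(j+1) = a * a^j := fun j _ => by rw [pow_succ']
          rw [Finset.sum_congr rfl this, ← Finset.mul_sum, ← hroot, ← pow_succ']
        have hb : |a^(k+1) * ((gfib k m : ℝ) - f*a^m)| ≤ a^(k+1) * (1/2) := by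
          rw [hE]
          calc |∑ j ∈ Finset.range k, a^(j+1) * ((gfib k (m-(j+1)) : ℝ) - f*a^(m-(j+1)))|
              ≤ ∑ j ∈ Finset.range k, |a^(j+1) * ((gfib k (m-(j+1)) : ℝ) - f*a^(m-(j+1)))| :=
                Finset.abs_sum_le_sum_abs _ _
            _ ≤ ∑ j ∈ Finset.range k, a^(j+1) * (1/2) := by
                apply Finset.sum_le_sum
                intro j hj
                simp only [Finset.mem_range] at hj
                rw [abs_mul, abs_of_nonneg (by positivity)]
                exact mul_le_mul_of_nonneg_left (ih _ (by omega)) (by positivity)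
            _ = a^(k+1) * (1/2) := by rw [← Finset.sum_mul, hSig]
        rw [abs_mul, abs_of_nonneg (by positivity : (0:ℝ) ≤ a^(k+1))] at hb
        have := mul_le_mul_of_nonneg_left (le_refl (1/2 : ℝ)) (le_of_lt (show (0:ℝ) < a^(k+1) by positivity))
        calc |(gfib k m : ℝ) - f*a^m| = (a^(k+1) * |(gfib k m : ℝ) - f*a^m|) / a^(k+1) := by
              field_simp
          _ ≤ (a^(k+1) * (1/2)) / a^(k+1) := by
              apply div_le_div_of_nonneg_right hb (by positivity)
          _ = 1/2 := by field_simp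

end E

lemma hsum_mul {r : ℝ} (hr : 0 < r) :
    (∑ j ∈ Finset.range k, (r⁻¹) ^ (j+1)) * r^k = ∑ j ∈ Finset.range k, r^j := by
  rw [Finset.sum_mul]
  have e : ∀ j ∈ Finset.range k, (r⁻¹)^(j+1) * r^k = r^(k - (j+1)) := by
    intro j hj
    simp only [Finset.mem_range] at hj
    rw [inv_pow, inv_mul_eq_div, div_eq_iff (by positivity), ← pow_add]
    congr 1
    omega
  rw [Finset.sum_congr rfl e]
  apply Finset.sum_nbij' (fun j => k - (j+1)) (fun j => k - (j+1))
  all_goals intro j hj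
  all_goals simp only [Finset.mem_range] at *
  all_goals omega

section CZ
variable {a : ℝ} {z : ℂ}

lemma zkey (hz : z ^ k = ∑ j ∈ Finset.range k, z ^ j) : z^k * (2 - z) = 1 := by
  have h1 : z * (∑ j ∈ Finset.range k, z^j)
      = (∑ j ∈ Finset.range k, z^j) + z^k - 1 := by
    have e1 := Finset.sum_range_succ (fun j => z^j) k
    have e2 := Finset.sum_range_succ' (fun j => z^j) k
    have e3 : z * (∑ j ∈ Finset.range k, z^j) = ∑ j ∈ Finset.range k, z^(j+1) := by
      rw [Finset.mul_sum]
      exact Finset.sum_congr rfl fun j _ => by rw [pow_succ']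
    simp only [pow_zero] at e2
    rw [e3]
    rw [e1] at e2
    linear_combination -e2
  linear_combination (1 - z) * hz - h1

lemma root_abs_le_one (hk : 2 ≤ k) (ha1 : 1 < a)
    (hroot : a ^ k = ∑ j ∈ Finset.range k, a ^ j)
    (hkey : a ^ k * (2 - a) = 1) (ha2 : a < 2)
    (hsumle : ∀ {r : ℝ}, 0 < r → ∑ j ∈ Finset.range k, (r⁻¹) ^ (j+1) ≤ 1 → a ≤ r)
    (hsumge : ∀ {r : ℝ}, 0 < r → 1 ≤ ∑ j ∈ Finset.range k, (r⁻¹) ^ (j+1) → r ≤ a)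
    (hz : z ^ k = ∑ j ∈ Finset.range k, z ^ j) (hne : z ≠ (a:ℂ)) :
    ‖z‖ ≤ 1 := by
  by_contra hc
  push_neg at hc
  set r := ‖z‖ with hrdef
  have hr0 : (0:ℝ) < r := by linarith
  have hq := zkey hz
  have habs : r^k * ‖2 - z‖ = 1 := by
    have := congrArg (‖·‖) hq
    rwa [norm_mul, norm_pow, norm_one] at this
  -- Psi side : r ≤ a
  have hΨ : r^k ≤ ∑ j ∈ Finset.range k, r^j := by
    calc r^k = ‖z^k‖ := by rw [norm_pow]
      _ = ‖∑ j ∈ Finset.range k, z^j‖ := by rw [hz]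
      _ ≤ ∑ j ∈ Finset.range k, ‖z^j‖ := norm_sum_le _ _
      _ = ∑ j ∈ Finset.range k, r^j := by
          exact Finset.sum_congr rfl fun j _ => by rw [norm_pow]
  have hra : r ≤ a := by
    apply hsumge hr0
    have hmul := hsum_mul (k := k) hr0
    have hrk : (0:ℝ) < r^k := by positivity
    nlinarith [hmul, hΨ]
  -- q side : a ≤ r
  have h2r : 2 - r ≤ ‖2 - z‖ := by
    have := norm_sub_norm_le (2:ℂ) z
    simpa using this
  have hqr : r^k * (2 - r) ≤ 1 := by
    have hrk : (0:ℝ) < r^k := by positivity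
    nlinarith [habs, h2r]
  have hgeom : ∑ j ∈ Finset.range k, r^j ≤ r^k := by
    rw [geom_sum_eq (by linarith : r ≠ 1)]
    rw [div_le_iff₀ (by linarith)]
    nlinarith [hqr]
  have har : a ≤ r := by
    apply hsumle hr0
    have hmul := hsum_mul (k := k) hr0
    have hrk : (0:ℝ) < r^k := by positivity
    nlinarith [hmul, hgeom]
  have hreq : r = a := le_antisymm hra har
  -- equality case : z is real
  have hrk : (0:ℝ) < r^k := by positivity
  have ht : ‖2 - z‖ = 2 - a := by
    have h1 : r^k * ‖2 - z‖ = r^k * (2 - a) := by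
      rw [habs, hreq]; exact hkey.symm
    exact mul_left_cancel₀ (ne_of_gt hrk) h1
  have h2 : Complex.normSq (2 - z) = (2-a)^2 := by
    rw [← Complex.sq_norm, ht]
  have h3 : Complex.normSq z = a^2 := by
    rw [← Complex.sq_norm, ← hrdef, hreq]
  simp only [Complex.normSq_apply, Complex.sub_re, Complex.sub_im] at h2 h3
  have hre : z.re = a := by
    have : (2:ℂ).re = 2 := by simp
    rw [this] at h2
    have : (2:ℂ).im = 0 := by simp
    rw [this] at h2
    nlinarith [h2, h3]
  have him : z.im = 0 := by
    have : z.im * z.im = 0 := by nlinarith [h3, hre]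
    exact mul_self_eq_zero.mp this
  apply hne
  apply Complex.ext
  · simpa using hre
  · simpa using him

end CZ

variable {a : ℝ}

lemma isIntegral_a (hk : 2 ≤ k)
    (hroot : a ^ k = ∑ j ∈ Finset.range k, a ^ j) : IsIntegral ℤ a := by
  refine ⟨Polynomial.X^k - ∑ j ∈ Finset.range k, Polynomial.X^j, ?_, ?_⟩
  · have hdeg : (∑ j ∈ Finset.range k, (Polynomial.X:Polynomial ℤ)^j).degree < (k : WithBot ℕ) := by
      apply lt_of_le_of_lt (Polynomial.degree_sum_le _ _)
      rw [Finset.sup_lt_iff (by exact_mod_cast WithBot.bot_lt_coe k)]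
      intro j hj
      simp only [Finset.mem_range] at hj
      apply lt_of_le_of_lt (Polynomial.degree_X_pow_le j)
      exact_mod_cast hj
    exact Polynomial.monic_X_pow_sub hdeg
  · simp only [Polynomial.eval₂_sub, Polynomial.eval₂_pow, Polynomial.eval₂_X,
      Polynomial.eval₂_finset_sum]
    rw [hroot]
    ring

lemma isIntegral_ainv (hk : 2 ≤ k) (ha1 : 1 < a)
    (hroot : a ^ k = ∑ j ∈ Finset.range k, a ^ j)
    (hkey : a ^ k * (2 - a) = 1) : IsIntegral ℤ (a⁻¹) := by
  have hIa := isIntegral_a hk hroot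
  have hmul : a * (2*a^(k-1) - a^k) = 1 := by
    have h : a ^ (k-1) * a = a ^ k := by
      rw [← pow_succ]; congr 1; omega
    linear_combination 2 * h + hkey
  have hinv : a⁻¹ = 2*a^(k-1) - a^k := (eq_inv_of_mul_eq_one_right
    (by linear_combination hmul)).symm
  rw [hinv]
  have h2 : IsIntegral ℤ (2:ℝ) := by
    have : ((2:ℤ):ℝ) = (2:ℝ) := by norm_num
    exact this ▸ isIntegral_algebraMap (x := (2:ℤ))
  exact (h2.mul (hIa.pow _)).sub (hIa.pow _)

lemma gamma_ne_aux (hk : 2 ≤ k) (ha1 : 1 < a)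
    (hroot : a ^ k = ∑ j ∈ Finset.range k, a ^ j)
    (hkey : a ^ k * (2 - a) = 1)
    {P Q l : ℕ} (hQ : 2 ≤ Q) (hl : 1 ≤ l)
    (heq : (P:ℝ) - 1 = a^l * ((Q:ℝ) - 1)) : False := by
  have ha0 : (0:ℝ) < a := by linarith
  have hal : 1 < a^l := one_lt_pow₀ ha1 (by omega)
  have hQ1 : (1:ℝ) ≤ (Q:ℝ) - 1 := by
    have : (2:ℝ) ≤ (Q:ℝ) := by exact_mod_cast hQ
    linarith
  have hPQ : (Q:ℝ) - 1 < (P:ℝ) - 1 := by nlinarith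
  have hP1 : (1:ℝ) < (P:ℝ) - 1 := by linarith
  -- the rational number
  set q : ℚ := ((Q:ℚ) - 1)/((P:ℚ) - 1) with hq
  have hcast : ((q:ℝ)) = ((Q:ℝ) - 1)/((P:ℝ) - 1) := by
    rw [hq]
    push_cast
    norm_num
  have hinvl : (a⁻¹)^l = ((q:ℝ)) := by
    rw [hcast, inv_pow]
    rw [inv_eq_iff_eq_inv, eq_comm, inv_div]
    rw [div_eq_iff (by linarith)]
    linarith [heq]
  have hIq : IsIntegral ℤ ((q:ℝ)) := hinvl ▸ (isIntegral_ainv hk ha1 hroot hkey).pow l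
  have hIq' : IsIntegral ℤ q := by
    have : (algebraMap ℚ ℝ) q = (q:ℝ) := by norm_num [algebraMap]
    rw [← this] at hIq
    exact (isIntegral_algebraMap_iff (algebraMap ℚ ℝ).injective).mp hIq
  obtain ⟨n, hn⟩ := IsIntegrallyClosed.isIntegral_iff.mp hIq'
  have hnq : (n:ℚ) = q := by exact_mod_cast hn
  have hq0 : 0 < q := by
    apply div_pos
    · have : (2:ℚ) ≤ (Q:ℚ) := by exact_mod_cast hQ
      linarith
    · have : (1:ℚ) < (P:ℚ) - 1 := by exact_mod_cast hP1
      linarith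
  have hq1 : q < 1 := by
    rw [hq, div_lt_one (by exact_mod_cast lt_trans one_pos hP1)]
    exact_mod_cast hPQ
  rw [← hnq] at hq0 hq1
  have h0 : (0:ℤ) < n := by exact_mod_cast hq0
  have h1 : n < 1 := by exact_mod_cast hq1
  omega

set_option maxHeartbeats 2000000 in
/-- **Norm estimates in the gcd argument.**
Let `α_1, …, α_k` be the distinct complex roots of `Ψ_k(X) = X^k - X^{k-1} - ⋯ - X - 1`,
with `α_1 = α₁ > 1` real. For integers `x > y ≥ 4` and `λ = x - y`, the algebraic number
`γ = (F_x^{(k)} - 1) - α₁^λ (F_y^{(k)} - 1)` is nonzero and satisfies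
`|γ| < (3/2) * α₁^λ`; moreover for each `i` with `2 ≤ i ≤ k` (zero-indexed: `i ≥ 1`),
`|(F_x^{(k)} - 1) - α_i^λ (F_y^{(k)} - 1)| < α₁^x`. -/
theorem gcd_conjugate_estimates (k : ℕ) (hk : 2 ≤ k) (α : Fin k → ℂ)
    (hdist : Function.Injective α)
    (hroot : ∀ i, (α i) ^ k = ∑ j ∈ Finset.range k, (α i) ^ j)
    (α₁ : ℝ) (hα₁ : 1 < α₁) (hα₁eq : α ⟨0, by omega⟩ = (α₁ : ℂ))
    (x y : ℕ) (hy : 4 ≤ y) (hyx : y < x) :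
    (((kFib k x : ℝ) - 1) - α₁ ^ (x - y) * ((kFib k y : ℝ) - 1) ≠ 0 ∧
      |((kFib k x : ℝ) - 1) - α₁ ^ (x - y) * ((kFib k y : ℝ) - 1)| <
        3 / 2 * α₁ ^ (x - y)) ∧
    ∀ i : Fin k, 1 ≤ (i : ℕ) →
      ‖((kFib k x : ℂ) - 1) - (α i) ^ (x - y) * ((kFib k y : ℂ) - 1)‖ <
        α₁ ^ x := by
  -- notation
  have hk0 : k ≠ 0 := by omega
  -- real root equation
  have hz0 := hroot ⟨0, by omega⟩
  rw [hα₁eq] at hz0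
  have hrootR : α₁ ^ k = ∑ j ∈ Finset.range k, α₁ ^ j := by
    have h : ((α₁ ^ k : ℝ) : ℂ) = ((∑ j ∈ Finset.range k, α₁ ^ j : ℝ) : ℂ) := by
      push_cast
      exact hz0
    exact_mod_cast h
  have hkey := key_eq hα₁ hrootR
  have ha2 := a_lt_two hα₁ hkey
  have h16 := a_ge hα₁ (a_sq hk hα₁ hrootR)
  have hsumle : ∀ {r : ℝ}, 0 < r → ∑ j ∈ Finset.range k, (r⁻¹) ^ (j+1) ≤ 1 → α₁ ≤ r :=
    fun hr h => ge_a_of_hsum_le hk0 hα₁ hrootR hr h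
  have hsumge : ∀ {r : ℝ}, 0 < r → 1 ≤ ∑ j ∈ Finset.range k, (r⁻¹) ^ (j+1) → r ≤ α₁ :=
    fun hr h => le_a_of_hsum_ge hk0 hα₁ hrootR hr h
  have hD : (k:ℝ) < α₁^(k+1) := apow_gt_k hk h16 pow16
  have hDpos : (0:ℝ) < α₁^(k+1) - k := by linarith
  have hc1 := c_le_half hk hα₁ hkey ha2 h16 @hsumge pow16'
  have hc2 := c_ge_inv hk hα₁ hkey ha2
  have hE := E_bound hk hα₁ hrootR hkey ha2 hD hc1 hc2
  set f : ℝ := α₁*(α₁-1)/(α₁^(k+1) - k) with hf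
  set c : ℝ := f * α₁^(k-2) with hc
  have ha0 : (0:ℝ) < α₁ := by linarith
  have hfpos : 0 < f := div_pos (by nlinarith) hDpos
  have hcpos : 0 < c := by rw [hc]; positivity
  have hcle : c ≤ 1/2 := by
    rw [hc, hf, div_mul_eq_mul_div, div_le_iff₀ hDpos]
    have e : α₁*(α₁-1)*α₁^(k-2) = (α₁-1)*α₁^(k-1) := by
      have h : α₁ * α₁^(k-2) = α₁^(k-1) := by rw [← pow_succ']; congr 1; omega
      linear_combination (α₁-1) * h
    rw [e]; linarith
  have hBinet : ∀ n : ℕ, |(kFib k n : ℝ) - c * α₁^n| ≤ 1/2 := by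
    intro n
    have h := hE (n + k - 2)
    have e : c * α₁^n = f * α₁^(n + k - 2) := by
      rw [hc, mul_assoc, ← pow_add]
      congr 2
      omega
    have h2 : kFib k n = gfib k (n + k - 2) := rfl
    rw [h2, e]
    exact h
  have hax : α₁^(x-y) * α₁^y = α₁^x := by rw [← pow_add]; congr 1; omega
  have hal1 : 1 < α₁^(x-y) := one_lt_pow₀ hα₁ (by omega)
  have hFy2 : 2 ≤ kFib k y := gfib_two hk _ (by omega)
  have hFx2 : 2 ≤ kFib k x := gfib_two hk _ (by omega)
  have hFyR : (2:ℝ) ≤ (kFib k y : ℝ) := by exact_mod_cast hFy2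
  have hFxR : (2:ℝ) ≤ (kFib k x : ℝ) := by exact_mod_cast hFx2
  have hex := hBinet x
  have hey := hBinet y
  rw [abs_le] at hex hey
  have hγ : ((kFib k x : ℝ) - 1) - α₁^(x-y) * ((kFib k y : ℝ) - 1)
      = ((kFib k x : ℝ) - c*α₁^x) - 1 + α₁^(x-y) * (1 - ((kFib k y : ℝ) - c*α₁^y)) := by
    linear_combination (-(c : ℝ)) * hax
  constructor
  · constructor
    · -- nonvanishing
      intro h0
      have heq : (kFib k x : ℝ) - 1 = α₁^(x-y) * ((kFib k y : ℝ) - 1) := by linarith [sub_eq_zero.mp h0]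
      exact gamma_ne_aux hk hα₁ hrootR hkey hFy2 (by omega) heq
    · -- size bound
      rw [hγ, abs_lt]
      have hL0 : (0:ℝ) < α₁^(x-y) := by positivity
      have hub : α₁^(x-y) * (1 - ((kFib k y : ℝ) - c*α₁^y)) ≤ α₁^(x-y) * (3/2) :=
        mul_le_mul_of_nonneg_left (by linarith [hey.1]) (le_of_lt hL0)
      have hlb : α₁^(x-y) * (1/2) ≤ α₁^(x-y) * (1 - ((kFib k y : ℝ) - c*α₁^y)) :=
        mul_le_mul_of_nonneg_left (by linarith [hey.2]) (le_of_lt hL0)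
      constructor
      · nlinarith [hex.1, hlb, hal1]
      · nlinarith [hex.2, hub]
  · -- conjugate bounds
    intro i hi
    have hne : α i ≠ (α₁ : ℂ) := by
      rw [← hα₁eq]
      intro h
      have h2 := hdist h
      have h3 : (i:ℕ) = 0 := by rw [h2]
      omega
    have habs1 : ‖α i‖ ≤ 1 :=
      root_abs_le_one hk hα₁ hrootR hkey ha2 @hsumle @hsumge (hroot i) hne
    have e1 : ((kFib k x : ℂ)) - 1 = (((kFib k x : ℝ) - 1 : ℝ) : ℂ) := by push_cast; ring
    have e2 : ((kFib k y : ℂ)) - 1 = (((kFib k y : ℝ) - 1 : ℝ) : ℂ) := by push_cast; ring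
    rw [e1, e2]
    have tineq : ‖(((kFib k x : ℝ) - 1 : ℝ) : ℂ)
          - α i ^ (x-y) * (((kFib k y : ℝ) - 1 : ℝ) : ℂ)‖
        ≤ ((kFib k x : ℝ) - 1) + ((kFib k y : ℝ) - 1) := by
      have hu : (0:ℝ) ≤ (kFib k x : ℝ) - 1 := by linarith
      have hv : (0:ℝ) ≤ (kFib k y : ℝ) - 1 := by linarith
      calc ‖(((kFib k x : ℝ) - 1 : ℝ) : ℂ)
            - α i ^ (x-y) * (((kFib k y : ℝ) - 1 : ℝ) : ℂ)‖
          ≤ ‖(((kFib k x : ℝ) - 1 : ℝ) : ℂ)‖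
            + ‖α i ^ (x-y) * (((kFib k y : ℝ) - 1 : ℝ) : ℂ)‖ := by
            rw [sub_eq_add_neg]
            refine (norm_add_le _ _).trans ?_
            rw [norm_neg]
        _ = |(kFib k x : ℝ) - 1| + (‖α i‖)^(x-y) * |(kFib k y : ℝ) - 1| := by
            rw [norm_mul, norm_pow, Complex.norm_real, Complex.norm_real, Real.norm_eq_abs, Real.norm_eq_abs]
        _ ≤ ((kFib k x : ℝ) - 1) + 1 * ((kFib k y : ℝ) - 1) := by
            rw [abs_of_nonneg hu, abs_of_nonneg hv]
            have h1 : (‖α i‖)^(x-y) ≤ 1 :=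
              pow_le_one₀ (norm_nonneg _) habs1
            nlinarith [h1, hv]
        _ = ((kFib k x : ℝ) - 1) + ((kFib k y : ℝ) - 1) := by ring
    have hpowyx : α₁^y ≤ α₁^x := pow_le_pow_right₀ (le_of_lt hα₁) (by omega)
    have hcx : c * α₁^x ≤ (1/2) * α₁^x :=
      mul_le_mul_of_nonneg_right hcle (by positivity)
    have hcy : c * α₁^y ≤ (1/2) * α₁^y :=
      mul_le_mul_of_nonneg_right hcle (by positivity)
    have hxpos : (0:ℝ) < α₁^x := by positivity
    calc ‖(((kFib k x : ℝ) - 1 : ℝ) : ℂ)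
          - α i ^ (x-y) * (((kFib k y : ℝ) - 1 : ℝ) : ℂ)‖
        ≤ ((kFib k x : ℝ) - 1) + ((kFib k y : ℝ) - 1) := tineq
      _ < α₁ ^ x := by nlinarith [hex.2, hey.2, hcx, hcy, hpowyx]
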